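/- Let N ≥ 2, let x¹, …, xᴺ ∈ ℝ be pairwise distinct, and fix 1 ≤ i ≤ N. Then 2 · ∑_{k≠i} ∑_{ℓ≠k, ℓ≠i} 1/((x^k − x^ℓ)(x^i − x^k)) = ∑_{k≠i} ∑_{ℓ≠i, ℓ≠k} 1/((x^i − x^k)(x^i − x^ℓ)), where all sums range over indices in {1,…,N} subject to the indicated exclusions. -/
import Mathlib


open Finset

lemma pair_sum_eq (N : ℕ) (S : Finset (Fin N)) (f : Fin N → Fin N → ℝ) :
    (∑ k ∈ S, ∑ l ∈ S.erase k, f k l)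
    = ∑ p ∈ (S ×ˢ S).filter (fun p => p.1 ≠ p.2), f p.1 p.2 := by
  rw [Finset.sum_filter, Finset.sum_product]
  refine Finset.sum_congr rfl fun k _ => ?_
  rw [← Finset.filter_ne, Finset.sum_filter]

lemma swap_sum_eq (N : ℕ) (S : Finset (Fin N)) (f : Fin N → Fin N → ℝ) :
    (∑ p ∈ (S ×ˢ S).filter (fun p => p.1 ≠ p.2), f p.2 p.1)
    = ∑ p ∈ (S ×ˢ S).filter (fun p => p.1 ≠ p.2), f p.1 p.2 := by
  refine Finset.sum_nbij' (fun p => Prod.swap p) (fun p => Prod.swap p) ?_ ?_ ?_ ?_ ?_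
  · intro p hp; simp only [Finset.mem_filter, Finset.mem_product] at hp ⊢
    exact ⟨⟨hp.1.2, hp.1.1⟩, hp.2.symm⟩
  · intro p hp; simp only [Finset.mem_filter, Finset.mem_product] at hp ⊢
    exact ⟨⟨hp.1.2, hp.1.1⟩, hp.2.symm⟩
  · intro p _; simp
  · intro p _; simp
  · intro p _; simp

/-- The algebraic symmetrization identity \eqref{basicalgebra}:
`2 ∑_{k≠i} ∑_{ℓ≠k,i} 1/((x^k − x^ℓ)(x^i − x^k))` = ∑_{k≠i} ∑_{ℓ≠i,k} 1/((x^i − x^k)(x^i − x^ℓ))`. -/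
theorem basic_algebra_identity (N : ℕ) (hN : 2 ≤ N) (x : Fin N → ℝ)
    (hx : Function.Injective x) (i : Fin N) :
    2 * ∑ k ∈ univ.erase i, ∑ l ∈ (univ.erase i).erase k,
        ((x k - x l) * (x i - x k))⁻¹
    = ∑ k ∈ univ.erase i, ∑ l ∈ (univ.erase i).erase k,
        ((x i - x k) * (x i - x l))⁻¹ := by
  set S := (univ : Finset (Fin N)).erase i with hS
  rw [pair_sum_eq, pair_sum_eq]
  rw [two_mul]
  nth_rewrite 1 [← swap_sum_eq N S (fun k l => ((x k - x l) * (x i - x k))⁻¹)]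
  rw [← Finset.sum_add_distrib]
  refine Finset.sum_congr rfl fun p hp => ?_
  simp only [Finset.mem_filter, Finset.mem_product, hS, Finset.mem_erase] at hp
  obtain ⟨⟨⟨hk, -⟩, ⟨hl, -⟩⟩, hkl⟩ := hp
  have h1 : x p.1 - x p.2 ≠ 0 := sub_ne_zero.mpr (fun h => hkl (hx h))
  have h2 : x i - x p.1 ≠ 0 := sub_ne_zero.mpr (fun h => hk (hx h).symm)
  have h3 : x i - x p.2 ≠ 0 := sub_ne_zero.mpr (fun h => hl (hx h).symm)
  have h1' : x p.2 - x p.1 ≠ 0 := sub_ne_zero.mpr (fun h => hkl (hx h.symm))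
  field_simp
  ring
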